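/- The class C_E is closed under induced substructures and has both the joint embedding property and the amalgamation property. -/

import Mathlib

universe u

open FirstOrder FirstOrder.Language FirstOrder.Language.Structure CategoryTheory

namespace Ivanov

/-- `pp n` is the `(n+1)`-st prime number (`pp 0 = 2 = p₁`, `pp 1 = 3 = p₂`, …). -/
noncomputable def pp (n : ℕ) : ℕ := Nat.nth Nat.Prime n

/-- The language `L_E`, with one relation symbol `Eₙ` of arity `2 ⬝ pₙ` for each `n`. -/
def LE : Language := ⟨fun _ => Empty, fun k => {n : ℕ // 2 * pp n = k}⟩

instance (n : ℕ) : IsEmpty (LE.Functions n) := ⟨fun f => Empty.elim f⟩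

/-- `Eₙ`, read as a binary relation between `pₙ`-tuples. -/
def EErel {M : Type u} [LE.Structure M] (n : ℕ) (x y : Fin (pp n) → M) : Prop :=
  RelMap (L := LE) (n := 2 * pp n) (⟨n, rfl⟩ : LE.Relations (2 * pp n))
    (fun i => Fin.append x y (Fin.cast (two_mul (pp n)) i))

/-- The defining conditions of the class `C_E`, for a single `n` : `Eₙ` is an equivalence
relation on `pₙ`-tuples, invariant under permuting the coordinates of each of the two tuples,
and the `pₙ`-tuples with a repeated coordinate form a single isolated `Eₙ`-class. -/
structure EGood (M : Type u) [LE.Structure M] (n : ℕ) : Prop where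
  refl : ∀ x : Fin (pp n) → M, EErel n x x
  symm : ∀ x y : Fin (pp n) → M, EErel n x y → EErel n y x
  trans : ∀ x y z : Fin (pp n) → M, EErel n x y → EErel n y z → EErel n x z
  perm : ∀ (x y : Fin (pp n) → M) (σ τ : Equiv.Perm (Fin (pp n))),
    EErel n x y → EErel n (x ∘ σ) (y ∘ τ)
  diag : ∀ x y : Fin (pp n) → M, ¬Function.Injective x → ¬Function.Injective y → EErel n x y
  isolated : ∀ x y : Fin (pp n) → M, Function.Injective x → ¬Function.Injective y →
    ¬EErel n x y

/-- The class `C_E` of all finite `L_E`-structures in which each `Eₙ` is a coordinate-wise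
symmetric equivalence relation on `pₙ`-tuples whose tuples with repeated coordinates form a
single isolated class. -/
def CEclass : Set (Bundled.{u} LE.Structure) :=
  {M | Finite M ∧ ∀ n : ℕ, EGood M n}

/-- The induced structure on a subset of an `L_E`-structure. -/
def inducedStrE {M : Type u} [LE.Structure M] (A : Set M) : LE.Structure A where
  funMap := fun {_} f _ => isEmptyElim f
  RelMap := fun {_} r t => RelMap (L := LE) r fun i => (t i : M)

/-! ### Auxiliary lemmas -/

lemma pp_pos (n : ℕ) : 0 < pp n := (Nat.prime_nth_prime n).pos

lemma comp_append {α β : Type*} (f : α → β) {m k : ℕ} (u : Fin m → α) (v : Fin k → α) :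
    f ∘ Fin.append u v = Fin.append (f ∘ u) (f ∘ v) := by
  funext i
  induction i using Fin.addCases with
  | left i => simp [Fin.append_left]
  | right i => simp [Fin.append_right]

/-- Build an `LE`-structure from a family of binary relations on tuples. -/
def mkStr {Q : Type u} (R : ∀ n, (Fin (pp n) → Q) → (Fin (pp n) → Q) → Prop) :
    LE.Structure Q where
  funMap := fun {_} f _ => isEmptyElim f
  RelMap := fun {_} r t => R r.1
    (fun i => t (Fin.cast r.2 (Fin.cast (two_mul (pp r.1)).symm (Fin.castAdd (pp r.1) i))))
    (fun i => t (Fin.cast r.2 (Fin.cast (two_mul (pp r.1)).symm (Fin.natAdd (pp r.1) i))))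

lemma mkStr_EErel {Q : Type u} (R : ∀ n, (Fin (pp n) → Q) → (Fin (pp n) → Q) → Prop)
    (n : ℕ) (x y : Fin (pp n) → Q) :
    (@EErel Q (mkStr R) n x y) ↔ R n x y := by
  show R n _ _ ↔ R n x y
  refine iff_of_eq ?_
  congr 1
  · funext i; exact Fin.append_left x y i
  · funext i; exact Fin.append_right x y i

/-- Any `RelMap` in `LE` can be rewritten as an instance of `EErel`. -/
lemma relMap_eq_EErel {X : Type u} [LE.Structure X] {k : ℕ} (r : LE.Relations k)
    (t : Fin k → X) :
    RelMap (L := LE) r t ↔ EErel r.1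
      (fun i => t (Fin.cast r.2 (Fin.cast (two_mul (pp r.1)).symm (Fin.castAdd (pp r.1) i))))
      (fun i => t (Fin.cast r.2 (Fin.cast (two_mul (pp r.1)).symm (Fin.natAdd (pp r.1) i)))) := by
  obtain ⟨n, rfl⟩ := r
  unfold EErel
  refine iff_of_eq (congrArg _ ?_).symm
  funext i
  exact congrFun (Fin.append_castAdd_natAdd
    (f := fun i' => t (Fin.cast (two_mul (pp n)).symm i'))) _

lemma embed_EErel {A B : Type u} [LE.Structure A] [LE.Structure B] (g : A ↪[LE] B)
    (n : ℕ) (x y : Fin (pp n) → A) :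
    EErel n (g ∘ x) (g ∘ y) ↔ EErel n x y := by
  unfold EErel
  rw [← g.map_rel' (⟨n, rfl⟩ : LE.Relations (2 * pp n))
    (fun i => Fin.append x y (Fin.cast (two_mul (pp n)) i))]
  exact iff_of_eq (by
    congr 1
    funext i
    exact (congrFun (comp_append (⇑g) x y) _).symm)

/-! ### Closure under induced substructures -/

lemma induced_EErel {M : Type u} [LE.Structure M] (A : Set M) (n : ℕ)
    (x y : Fin (pp n) → A) :
    (@EErel A (inducedStrE A) n x y) ↔ EErel n ((↑) ∘ x : Fin (pp n) → M) ((↑) ∘ y) := by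
  have e : (fun i => ((Fin.append x y (Fin.cast (two_mul (pp n)) i) : A) : M)) =
      (fun i => Fin.append ((↑) ∘ x : Fin (pp n) → M) ((↑) ∘ y)
        (Fin.cast (two_mul (pp n)) i)) :=
    funext fun i => congrFun (comp_append (Subtype.val) x y) _
  exact iff_of_eq (congrArg (fun t => RelMap (L := LE)
    (⟨n, rfl⟩ : LE.Relations (2 * pp n)) t) e)

lemma inj_comp_iff {α β γ : Type*} {f : β → γ} (hf : Function.Injective f) (x : α → β) :
    Function.Injective (f ∘ x) ↔ Function.Injective x :=
  ⟨fun h => h.of_comp, hf.comp⟩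

lemma induced_EGood {M : Type u} [LE.Structure M] (hM : ∀ n, EGood M n) (A : Set M) (n : ℕ) :
    @EGood A (inducedStrE A) n := by
  letI := inducedStrE A
  have hv : Function.Injective (Subtype.val : A → M) := Subtype.val_injective
  constructor
  · intro x
    exact (induced_EErel A n x x).2 ((hM n).refl _)
  · intro x y h
    exact (induced_EErel A n y x).2 ((hM n).symm _ _ ((induced_EErel A n x y).1 h))
  · intro x y z hxy hyz
    exact (induced_EErel A n x z).2 ((hM n).trans _ _ _
      ((induced_EErel A n x y).1 hxy) ((induced_EErel A n y z).1 hyz))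
  · intro x y σ τ h
    exact (induced_EErel A n (x ∘ σ) (y ∘ τ)).2
      ((hM n).perm _ _ σ τ ((induced_EErel A n x y).1 h))
  · intro x y hx hy
    exact (induced_EErel A n x y).2 ((hM n).diag _ _
      (fun h => hx (h.of_comp)) (fun h => hy (h.of_comp)))
  · intro x y hx hy h
    exact (hM n).isolated _ _ (hv.comp hx)
      (fun h' => hy ((inj_comp_iff hv y).1 h')) ((induced_EErel A n x y).1 h)

/-! ### The amalgam construction -/

/-- The carrier of the amalgam: `N` together with `P` minus the image of `M`. -/
abbrev Qc (N : Type u) {M P : Type u} (gP : M → P) : Type u :=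
  N ⊕ {p : P // p ∉ Set.range gP}

section Amalg

open scoped Classical
set_option linter.unusedSectionVars false

variable {M N P : Type u} [LE.Structure M] [LE.Structure N] [LE.Structure P]
variable (gN : M ↪[LE] N) (gP : M ↪[LE] P)
variable (hN : ∀ n, EGood N n) (hP : ∀ n, EGood P n)

/-- The canonical map `P → Qc`. -/
noncomputable def jmap (p : P) : Qc N ⇑gP :=
  if h : p ∈ Set.range gP then Sum.inl (gN (Set.mem_range.mp h).choose) else Sum.inr ⟨p, h⟩

/-- The setoid of `Eₙ` on tuples. -/
def tupSetoid {X : Type u} [LE.Structure X] (h : ∀ n, EGood X n) (n : ℕ) :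
    Setoid (Fin (pp n) → X) :=
  ⟨EErel n, ⟨(h n).refl, fun a => (h n).symm _ _ a, fun a b => (h n).trans _ _ _ a b⟩⟩

/-- Label of a tuple in the amalgam, determining its `Eₙ`-class. -/
noncomputable def lab (n : ℕ) (x : Fin (pp n) → Qc N ⇑gP) :
    Quotient (tupSetoid hN n) ⊕ (Quotient (tupSetoid hP n) ⊕ Set (Qc N ⇑gP)) :=
  if h : ∃ x', x = Sum.inl ∘ x' then Sum.inl ⟦h.choose⟧
  else if h : ∃ x', x = jmap gN gP ∘ x' then
    (if h2 : ∃ m, EErel n h.choose (⇑gP ∘ m) then Sum.inl ⟦⇑gN ∘ h2.choose⟧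
     else Sum.inr (Sum.inl ⟦h.choose⟧))
  else Sum.inr (Sum.inr (Set.range x))

include gN gP hN hP

lemma jmap_gP (m : M) : jmap gN gP (gP m) = Sum.inl (gN m) := by
  have h : (gP m : P) ∈ Set.range gP := ⟨m, rfl⟩
  rw [jmap, dif_pos h]
  have : h.choose = m := gP.injective h.choose_spec
  rw [this]

lemma jmap_eq_inl {p : P} {a : N} (h : jmap gN gP p = Sum.inl a) :
    ∃ m : M, p = gP m ∧ a = gN m := by
  by_cases hp : p ∈ Set.range gP
  · rw [jmap, dif_pos hp] at h
    exact ⟨hp.choose, hp.choose_spec.symm, (Sum.inl_injective h).symm⟩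
  · rw [jmap, dif_neg hp] at h
    exact absurd h (by simp)

lemma jmap_inj : Function.Injective (jmap gN gP) := by
  intro p q h
  rw [jmap, jmap] at h
  by_cases hp : p ∈ Set.range gP <;> by_cases hq : q ∈ Set.range gP
  · rw [dif_pos hp, dif_pos hq] at h
    have h1 : gN hp.choose = gN hq.choose := Sum.inl_injective h
    have h2 := gN.injective h1
    rw [← hp.choose_spec, ← hq.choose_spec, h2]
  · rw [dif_pos hp, dif_neg hq] at h; exact absurd h (by simp)
  · rw [dif_neg hp, dif_pos hq] at h; exact absurd h (by simp)
  · rw [dif_neg hp, dif_neg hq] at h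
    exact congrArg Subtype.val (Sum.inr_injective h)

lemma lab_inl (n : ℕ) (x' : Fin (pp n) → N) :
    lab gN gP hN hP n (Sum.inl ∘ x') = Sum.inl ⟦x'⟧ := by
  have h : ∃ x'', (Sum.inl ∘ x' : Fin (pp n) → Qc N ⇑gP) = Sum.inl ∘ x'' := ⟨x', rfl⟩
  rw [lab, dif_pos h]
  have : h.choose = x' := by
    funext i
    exact (Sum.inl_injective (congrFun h.choose_spec i)).symm
  rw [this]

/-- key well-definedness: if `x' Eₙ gP∘m` and `x' Eₙ gP∘m'` then `gN∘m Eₙ gN∘m'`. -/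
lemma rep_eq {n : ℕ} {x' : Fin (pp n) → P} {m m' : Fin (pp n) → M}
    (h1 : EErel n x' (⇑gP ∘ m)) (h2 : EErel n x' (⇑gP ∘ m')) :
    EErel n (⇑gN ∘ m) (⇑gN ∘ m') := by
  have hPP : EErel n (⇑gP ∘ m) (⇑gP ∘ m') :=
    (hP n).trans _ _ _ ((hP n).symm _ _ h1) h2
  exact (embed_EErel gN n m m').2 ((embed_EErel gP n m m').1 hPP)

lemma lab_P_rep (n : ℕ) (x' : Fin (pp n) → P) (m : Fin (pp n) → M)
    (hm : EErel n x' (⇑gP ∘ m)) :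
    lab gN gP hN hP n (jmap gN gP ∘ x') = Sum.inl ⟦⇑gN ∘ m⟧ := by
  by_cases h : ∃ x'', (jmap gN gP ∘ x' : Fin (pp n) → Qc N ⇑gP) = Sum.inl ∘ x''
  · rw [lab, dif_pos h]
    have hall : ∀ i, ∃ mi, x' i = gP mi ∧ h.choose i = gN mi := by
      intro i
      exact jmap_eq_inl gN gP hN hP (congrFun h.choose_spec i)
    choose m₀ hm₀ hgN using hall
    have hx' : x' = ⇑gP ∘ m₀ := funext hm₀
    have hch : h.choose = ⇑gN ∘ m₀ := funext hgN
    rw [hch]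
    have hx0 : EErel n x' (⇑gP ∘ m₀) := by rw [← hx']; exact (hP n).refl x'
    exact congrArg Sum.inl (Quotient.sound (rep_eq gN gP hN hP hx0 hm))
  · have h' : ∃ x'', (jmap gN gP ∘ x' : Fin (pp n) → Qc N ⇑gP) = jmap gN gP ∘ x'' := ⟨x', rfl⟩
    have hch : h'.choose = x' := by
      funext i
      exact (jmap_inj gN gP hN hP (congrFun h'.choose_spec i)).symm
    rw [lab, dif_neg h, dif_pos h', hch]
    have h2 : ∃ mm, EErel n x' (⇑gP ∘ mm) := ⟨m, hm⟩
    rw [dif_pos h2]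
    exact congrArg Sum.inl (Quotient.sound (rep_eq gN gP hN hP h2.choose_spec hm))

lemma lab_P_norep (n : ℕ) (x' : Fin (pp n) → P)
    (hm : ¬∃ m, EErel n x' (⇑gP ∘ m)) :
    lab gN gP hN hP n (jmap gN gP ∘ x') = Sum.inr (Sum.inl ⟦x'⟧) := by
  have h : ¬∃ x'', (jmap gN gP ∘ x' : Fin (pp n) → Qc N ⇑gP) = Sum.inl ∘ x'' := by
    rintro ⟨x'', hx''⟩
    have hall : ∀ i, ∃ mi, x' i = gP mi ∧ x'' i = gN mi := fun i =>
      jmap_eq_inl gN gP hN hP (congrFun hx'' i)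
    choose m₀ hm₀ _ using hall
    exact hm ⟨m₀, (funext hm₀ : x' = ⇑gP ∘ m₀) ▸ (hP n).refl x'⟩
  have h' : ∃ x'', (jmap gN gP ∘ x' : Fin (pp n) → Qc N ⇑gP) = jmap gN gP ∘ x'' := ⟨x', rfl⟩
  have hch : h'.choose = x' := by
    funext i
    exact (jmap_inj gN gP hN hP (congrFun h'.choose_spec i)).symm
  rw [lab, dif_neg h, dif_pos h', hch, dif_neg hm]

lemma lab_mixed (n : ℕ) (x : Fin (pp n) → Qc N ⇑gP)
    (h1 : ¬∃ x', x = Sum.inl ∘ x') (h2 : ¬∃ x', x = jmap gN gP ∘ x') :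
    lab gN gP hN hP n x = Sum.inr (Sum.inr (Set.range x)) := by
  rw [lab, dif_neg h1, dif_neg h2]

/-- The amalgam relation. -/
def QE (n : ℕ) (x y : Fin (pp n) → Qc N ⇑gP) : Prop :=
  (¬Function.Injective x ∧ ¬Function.Injective y) ∨
  (Function.Injective x ∧ Function.Injective y ∧
    lab gN gP hN hP n x = lab gN gP hN hP n y)

/-- The amalgam structure. -/
noncomputable def QStr : LE.Structure (Qc N ⇑gP) := mkStr (QE gN gP hN hP)

lemma lab_perm (n : ℕ) (x : Fin (pp n) → Qc N ⇑gP) (σ : Equiv.Perm (Fin (pp n))) :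
    lab gN gP hN hP n (x ∘ ⇑σ) = lab gN gP hN hP n x := by
  by_cases h : ∃ x', x = Sum.inl ∘ x'
  · obtain ⟨x', rfl⟩ := h
    have e : (Sum.inl ∘ x') ∘ ⇑σ = (Sum.inl ∘ (x' ∘ ⇑σ) : Fin (pp n) → Qc N ⇑gP) := rfl
    rw [e, lab_inl, lab_inl]
    refine congrArg _ (Quotient.sound ?_)
    exact (show EErel n (x' ∘ ⇑σ) x' by
      simpa using (hN n).perm x' x' σ (Equiv.refl _) ((hN n).refl x'))
  · by_cases h' : ∃ x', x = jmap gN gP ∘ x'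
    · obtain ⟨x', rfl⟩ := h'
      have e : (jmap gN gP ∘ x') ∘ ⇑σ = jmap gN gP ∘ (x' ∘ ⇑σ) := rfl
      rw [e]
      by_cases h2 : ∃ m, EErel n x' (⇑gP ∘ m)
      · obtain ⟨m, hm⟩ := h2
        have hmσ : EErel n (x' ∘ ⇑σ) (⇑gP ∘ m) := by
          simpa using (hP n).perm x' (⇑gP ∘ m) σ (Equiv.refl _) hm
        rw [lab_P_rep gN gP hN hP n _ m hmσ, lab_P_rep gN gP hN hP n _ m hm]
      · have h2σ : ¬∃ m, EErel n (x' ∘ ⇑σ) (⇑gP ∘ m) := by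
          rintro ⟨m, hm⟩
          refine h2 ⟨m, ?_⟩
          have := (hP n).perm (x' ∘ ⇑σ) (⇑gP ∘ m) σ⁻¹ (Equiv.refl _) hm
          have e2 : (x' ∘ ⇑σ) ∘ ⇑σ⁻¹ = x' := by
            funext i; simp
          rwa [e2] at this
          
        rw [lab_P_norep gN gP hN hP n _ h2σ, lab_P_norep gN gP hN hP n _ h2]
        refine congrArg _ (congrArg _ (Quotient.sound ?_))
        exact (show EErel n (x' ∘ ⇑σ) x' by
          simpa using (hP n).perm x' x' σ (Equiv.refl _) ((hP n).refl x'))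
    · have hσ1 : ¬∃ x', x ∘ ⇑σ = Sum.inl ∘ x' := by
        rintro ⟨x', hx'⟩
        refine h ⟨x' ∘ ⇑σ⁻¹, funext fun i => ?_⟩
        have := congrFun hx' (σ⁻¹ i)
        simpa using this
      have hσ2 : ¬∃ x', x ∘ ⇑σ = jmap gN gP ∘ x' := by
        rintro ⟨x', hx'⟩
        refine h' ⟨x' ∘ ⇑σ⁻¹, funext fun i => ?_⟩
        have := congrFun hx' (σ⁻¹ i)
        simpa using this
      rw [lab_mixed gN gP hN hP n _ hσ1 hσ2, lab_mixed gN gP hN hP n x h h']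
      exact congrArg _ (congrArg _ (σ.surjective.range_comp x))

lemma QGood (n : ℕ) : @EGood (Qc N ⇑gP) (QStr gN gP hN hP) n := by
  letI := QStr gN gP hN hP
  have key : ∀ x y, EErel n x y ↔ QE gN gP hN hP n x y :=
    mkStr_EErel (QE gN gP hN hP) n
  constructor
  · intro x
    refine (key x x).2 ?_
    by_cases h : Function.Injective x
    · exact Or.inr ⟨h, h, rfl⟩
    · exact Or.inl ⟨h, h⟩
  · intro x y h
    rcases (key x y).1 h with ⟨h1, h2⟩ | ⟨h1, h2, h3⟩
    · exact (key y x).2 (Or.inl ⟨h2, h1⟩)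
    · exact (key y x).2 (Or.inr ⟨h2, h1, h3.symm⟩)
  · intro x y z hxy hyz
    rcases (key x y).1 hxy with ⟨h1, h2⟩ | ⟨h1, h2, h3⟩ <;>
      rcases (key y z).1 hyz with ⟨h1', h2'⟩ | ⟨h1', h2', h3'⟩
    · exact (key x z).2 (Or.inl ⟨h1, h2'⟩)
    · exact absurd h1' h2
    · exact absurd h2 h1'
    · exact (key x z).2 (Or.inr ⟨h1, h2', h3.trans h3'⟩)
  · intro x y σ τ h
    rcases (key x y).1 h with ⟨h1, h2⟩ | ⟨h1, h2, h3⟩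
    · exact (key _ _).2 (Or.inl ⟨fun h' => h1 ((σ.injective_comp x).1 h'),
        fun h' => h2 ((τ.injective_comp y).1 h')⟩)
    · exact (key _ _).2 (Or.inr ⟨(σ.injective_comp x).2 h1, (τ.injective_comp y).2 h2,
        by rw [lab_perm gN gP hN hP n x σ, lab_perm gN gP hN hP n y τ, h3]⟩)
  · intro x y hx hy
    exact (key x y).2 (Or.inl ⟨hx, hy⟩)
  · intro x y hx hy h
    rcases (key x y).1 h with ⟨h1, _⟩ | ⟨_, h2, _⟩
    · exact h1 hx
    · exact hy h2

lemma QE_inl_iff (n : ℕ) (a b : Fin (pp n) → N) :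
    QE gN gP hN hP n (Sum.inl ∘ a) (Sum.inl ∘ b) ↔ EErel n a b := by
  constructor
  · rintro (⟨h1, h2⟩ | ⟨h1, h2, h3⟩)
    · exact (hN n).diag a b (fun h => h1 (Sum.inl_injective.comp h))
        (fun h => h2 (Sum.inl_injective.comp h))
    · rw [lab_inl, lab_inl] at h3
      exact Quotient.exact (Sum.inl_injective h3)
  · intro h
    by_cases ha : Function.Injective a
    · have hb : Function.Injective b := by
        by_contra hb
        exact (hN n).isolated a b ha hb h
      refine Or.inr ⟨Sum.inl_injective.comp ha, Sum.inl_injective.comp hb, ?_⟩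
      rw [lab_inl, lab_inl]
      exact congrArg Sum.inl (Quotient.sound h)
    · have hb : ¬Function.Injective b := fun hb =>
        (hN n).isolated b a hb ha ((hN n).symm _ _ h)
      exact Or.inl ⟨fun h' => ha h'.of_comp, fun h' => hb h'.of_comp⟩

lemma QE_j_iff (n : ℕ) (a b : Fin (pp n) → P) :
    QE gN gP hN hP n (jmap gN gP ∘ a) (jmap gN gP ∘ b) ↔ EErel n a b := by
  have hji := jmap_inj gN gP hN hP
  constructor
  · rintro (⟨h1, h2⟩ | ⟨h1, h2, h3⟩)
    · exact (hP n).diag a b (fun h => h1 (hji.comp h)) (fun h => h2 (hji.comp h))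
    · by_cases h2a : ∃ m, EErel n a (⇑gP ∘ m) <;> by_cases h2b : ∃ m, EErel n b (⇑gP ∘ m)
      · obtain ⟨ma, hma⟩ := h2a
        obtain ⟨mb, hmb⟩ := h2b
        rw [lab_P_rep gN gP hN hP n a ma hma, lab_P_rep gN gP hN hP n b mb hmb] at h3
        have hNN : EErel n (⇑gN ∘ ma) (⇑gN ∘ mb) := Quotient.exact (Sum.inl_injective h3)
        have hMM : EErel n ma mb := (embed_EErel gN n ma mb).1 hNN
        have hPP : EErel n (⇑gP ∘ ma) (⇑gP ∘ mb) := (embed_EErel gP n ma mb).2 hMM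
        exact (hP n).trans _ _ _ hma ((hP n).trans _ _ _ hPP ((hP n).symm _ _ hmb))
      · obtain ⟨ma, hma⟩ := h2a
        rw [lab_P_rep gN gP hN hP n a ma hma, lab_P_norep gN gP hN hP n b h2b] at h3
        exact absurd h3 (by simp)
      · obtain ⟨mb, hmb⟩ := h2b
        rw [lab_P_norep gN gP hN hP n a h2a, lab_P_rep gN gP hN hP n b mb hmb] at h3
        exact absurd h3 (by simp)
      · rw [lab_P_norep gN gP hN hP n a h2a, lab_P_norep gN gP hN hP n b h2b] at h3
        exact Quotient.exact (Sum.inl_injective (Sum.inr_injective h3))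
  · intro h
    by_cases ha : Function.Injective a
    · have hb : Function.Injective b := by
        by_contra hb
        exact (hP n).isolated a b ha hb h
      refine Or.inr ⟨hji.comp ha, hji.comp hb, ?_⟩
      by_cases h2a : ∃ m, EErel n a (⇑gP ∘ m)
      · obtain ⟨m, hm⟩ := h2a
        have hbm : EErel n b (⇑gP ∘ m) := (hP n).trans _ _ _ ((hP n).symm _ _ h) hm
        rw [lab_P_rep gN gP hN hP n a m hm, lab_P_rep gN gP hN hP n b m hbm]
      · have h2b : ¬∃ m, EErel n b (⇑gP ∘ m) := by
          rintro ⟨m, hm⟩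
          exact h2a ⟨m, (hP n).trans _ _ _ h hm⟩
        rw [lab_P_norep gN gP hN hP n a h2a, lab_P_norep gN gP hN hP n b h2b]
        exact congrArg _ (congrArg _ (Quotient.sound h))
    · have hb : ¬Function.Injective b := fun hb =>
        (hP n).isolated b a hb ha ((hP n).symm _ _ h)
      exact Or.inl ⟨fun h' => ha h'.of_comp, fun h' => hb h'.of_comp⟩

/-- The embedding of `N` into the amalgam. -/
noncomputable def inlEmb : @Embedding LE N (Qc N ⇑gP) _ (QStr gN gP hN hP) :=
  letI := QStr gN gP hN hP
  { toFun := Sum.inl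
    inj' := Sum.inl_injective
    map_fun' := fun {k} f _ => isEmptyElim f
    map_rel' := fun {k} r t => by
      rw [relMap_eq_EErel (X := Qc N ⇑gP) r (Sum.inl ∘ t), relMap_eq_EErel r t]
      exact (mkStr_EErel (QE gN gP hN hP) r.1 _ _).trans (QE_inl_iff gN gP hN hP r.1 _ _) }

/-- The embedding of `P` into the amalgam. -/
noncomputable def jEmb : @Embedding LE P (Qc N ⇑gP) _ (QStr gN gP hN hP) :=
  letI := QStr gN gP hN hP
  { toFun := jmap gN gP
    inj' := jmap_inj gN gP hN hP
    map_fun' := fun {k} f _ => isEmptyElim f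
    map_rel' := fun {k} r t => by
      rw [relMap_eq_EErel (X := Qc N ⇑gP) r (jmap gN gP ∘ t), relMap_eq_EErel r t]
      exact (mkStr_EErel (QE gN gP hN hP) r.1 _ _).trans (QE_j_iff gN gP hN hP r.1 _ _) }

end Amalg

/-! ### The empty structure -/

def emptyStr : LE.Structure PEmpty.{u + 1} := mkStr fun _ _ _ => True

lemma emptyGood (n : ℕ) : @EGood PEmpty.{u + 1} emptyStr n := by
  letI := emptyStr
  constructor <;> intro x <;> exact (x ⟨0, pp_pos n⟩).elim

def emptyEmb {X : Type u} [LE.Structure X] : @Embedding LE PEmpty.{u + 1} X emptyStr _ :=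
  letI := emptyStr
  { toFun := PEmpty.elim
    inj' := fun a => a.elim
    map_fun' := fun {k} f _ => isEmptyElim f
    map_rel' := fun {k} r t =>
      (t ⟨0, r.2 ▸ Nat.mul_pos two_pos (pp_pos r.1)⟩).elim }

/-! ### The main theorem -/

lemma CE_amalgamation : Amalgamation CEclass.{u} := by
  rintro M N P MN MP hM ⟨hNfin, hN⟩ ⟨hPfin, hP⟩
  letI := QStr MN MP hN hP
  refine ⟨Bundled.mk (Qc ↑N ⇑MP) (QStr MN MP hN hP), ?_, ?_, ⟨?_, ?_⟩, ?_⟩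
  · exact inlEmb MN MP hN hP
  · exact jEmb MN MP hN hP
  · exact (inferInstance : Finite (↑N ⊕ {p : ↑P // p ∉ Set.range ⇑MP}))
  · exact fun n => QGood MN MP hN hP n
  · apply Embedding.ext
    intro m
    exact (jmap_gP MN MP hN hP m).symm

/-- The class `C_E` is closed under induced substructures and has both the
joint embedding property and the amalgamation property. -/
theorem statement_16 :
    (∀ M ∈ CEclass.{u}, ∀ A : Set M,
      (⟨Set.Elem A, inducedStrE A⟩ : Bundled.{u} LE.Structure) ∈ CEclass.{u}) ∧
    JointEmbedding CEclass.{u} ∧ Amalgamation CEclass.{u} := by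
  refine ⟨?_, ?_, CE_amalgamation⟩
  · rintro M ⟨hMfin, hM⟩ A
    exact ⟨inferInstance, fun n => induced_EGood hM A n⟩
  · rintro N hN P hP
    obtain ⟨Q, NQ, PQ, hQ, -⟩ := CE_amalgamation.{u} ⟨PEmpty.{u + 1}, emptyStr⟩ N P
      emptyEmb emptyEmb ⟨inferInstance, emptyGood⟩ hN hP
    exact ⟨Q, hQ, ⟨NQ⟩, ⟨PQ⟩⟩

end Ivanov
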